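/- (Deterministic cumulative constraint-violation bound.) Let A, Ã_1, …, Ã_t ∈ ℝ^{d×K}, let ω_1, …, ω_t ∈ Δ_K, define the Gram matrices Σ_1 := I_K and Σ_{s+1} := Σ_s + ω_s ω_sᵀ, let f : {1,…,t} → [0,∞) be nondecreasing, and let Γ ≥ 0. Suppose that for every s ≤ t and every i ∈ {1,…,d}: ‖Ã_s^i − A^i‖_{Σ_s} ≤ f(s) and (Ã_s ω_s)_i ≤ −Γ. Then for every s ≤ t, max_i (Aω_s)_i ≤ f(s)·‖ω_s‖_{Σ_s⁻¹} − Γ, and consequently the cumulative constraint violation satisfies Σ_{s=1}^t max_i [(Aω_s)_i]₊ ≤ f(t)·√(2Kt·log(1 + (1+t)/K)), where [x]₊ := max(x, 0). -/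

import Mathlib

open Matrix

/-- Cauchy–Schwarz inequality for the bilinear form of a positive semidefinite matrix. -/
lemma psd_cauchy_schwarz {K : ℕ} {M : Matrix (Fin K) (Fin K) ℝ} (hM : M.PosSemidef)
    (x y : Fin K → ℝ) :
    (x ⬝ᵥ M.mulVec y) ^ 2 ≤ (x ⬝ᵥ M.mulVec x) * (y ⬝ᵥ M.mulVec y) := by
  have hsymm : ∀ u v : Fin K → ℝ, u ⬝ᵥ M.mulVec v = v ⬝ᵥ M.mulVec u := by
    intro u v
    have ht : Mᵀ = M := by
      rw [← conjTranspose_eq_transpose_of_trivial]; exact hM.1.eq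
    rw [dotProduct_mulVec, ← mulVec_transpose, ht, dotProduct_comm]
  have key : ∀ r : ℝ, 0 ≤ (y ⬝ᵥ M.mulVec y) * (r * r) + (2 * (x ⬝ᵥ M.mulVec y)) * r
      + (x ⬝ᵥ M.mulVec x) := by
    intro r
    have h0 := hM.dotProduct_mulVec_nonneg (x + r • y)
    simp only [star_trivial] at h0
    calc (0:ℝ) ≤ (x + r • y) ⬝ᵥ M.mulVec (x + r • y) := h0
      _ = (y ⬝ᵥ M.mulVec y) * (r * r) + (2 * (x ⬝ᵥ M.mulVec y)) * r + (x ⬝ᵥ M.mulVec x) := by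
          rw [mulVec_add, dotProduct_add, add_dotProduct, add_dotProduct,
            mulVec_smul, smul_dotProduct, smul_dotProduct, dotProduct_smul,
            hsymm y x]
          simp only [dotProduct_smul, smul_eq_mul]; ring
  have hd := discrim_le_zero key
  rw [discrim] at hd
  nlinarith [hd]

/-- Cauchy–Schwarz with a positive definite matrix and its inverse. -/
lemma pd_cs_inv {K : ℕ} {M : Matrix (Fin K) (Fin K) ℝ} (hM : M.PosDef)
    (x y : Fin K → ℝ) :
    x ⬝ᵥ y ≤ Real.sqrt (x ⬝ᵥ M.mulVec x) * Real.sqrt (y ⬝ᵥ M⁻¹.mulVec y) := by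
  set z := M⁻¹.mulVec y with hz
  have hMz : M.mulVec z = y := by
    rw [hz, mulVec_mulVec, Matrix.mul_nonsing_inv _ (isUnit_iff_isUnit_det _ |>.mp hM.isUnit),
      one_mulVec]
  have key := psd_cauchy_schwarz hM.posSemidef x z
  have hzz : z ⬝ᵥ M.mulVec z = y ⬝ᵥ M⁻¹.mulVec y := by
    rw [hMz, dotProduct_comm, hz]
  have hxy : x ⬝ᵥ y = x ⬝ᵥ M.mulVec z := by rw [hMz]
  rw [hxy]
  rw [hzz] at key
  have h1 : 0 ≤ x ⬝ᵥ M.mulVec x := by simpa using hM.posSemidef.dotProduct_mulVec_nonneg x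
  have h2 : 0 ≤ y ⬝ᵥ M⁻¹.mulVec y := by simpa using hM.inv.posSemidef.dotProduct_mulVec_nonneg y
  calc x ⬝ᵥ M.mulVec z ≤ |x ⬝ᵥ M.mulVec z| := le_abs_self _
    _ = Real.sqrt ((x ⬝ᵥ M.mulVec z) ^ 2) := (Real.sqrt_sq_eq_abs _).symm
    _ ≤ Real.sqrt ((x ⬝ᵥ M.mulVec x) * (y ⬝ᵥ M⁻¹.mulVec y)) := Real.sqrt_le_sqrt key
    _ = _ := Real.sqrt_mul h1 _

/-- The quadratic form of `M⁻¹` is at most `1` when `M ⪰ I` and `‖y‖² ≤ 1`. -/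
lemma inv_quad_le_one {K : ℕ} {M : Matrix (Fin K) (Fin K) ℝ} (hM : M.PosDef)
    (hMI : ∀ x : Fin K → ℝ, x ⬝ᵥ x ≤ x ⬝ᵥ M.mulVec x)
    {y : Fin K → ℝ} (hy : y ⬝ᵥ y ≤ 1) :
    y ⬝ᵥ M⁻¹.mulVec y ≤ 1 := by
  set z := M⁻¹.mulVec y with hz
  have hMz : M.mulVec z = y := by
    rw [hz, mulVec_mulVec, Matrix.mul_nonsing_inv _ (isUnit_iff_isUnit_det _ |>.mp hM.isUnit),
      one_mulVec]
  set q := y ⬝ᵥ M⁻¹.mulVec y with hq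
  have hq0 : 0 ≤ q := by simpa using hM.inv.posSemidef.dotProduct_mulVec_nonneg y
  have hqz : q = z ⬝ᵥ M.mulVec z := by rw [hq, hMz, dotProduct_comm, hz]
  have hzz : z ⬝ᵥ z ≤ q := hqz ▸ hMI z
  have hone : (1 : Matrix (Fin K) (Fin K) ℝ).PosSemidef := Matrix.PosSemidef.one
  have hcs := psd_cauchy_schwarz hone z y
  simp only [one_mulVec] at hcs
  have hzy : z ⬝ᵥ y = q := by rw [hq, hz, dotProduct_comm]
  rw [hzy] at hcs
  have hz0 : 0 ≤ z ⬝ᵥ z := by simpa using hone.dotProduct_mulVec_nonneg z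
  have hy0 : 0 ≤ y ⬝ᵥ y := by simpa using hone.dotProduct_mulVec_nonneg y
  nlinarith

/-- The matrix determinant lemma for a rank-one update of a positive definite matrix. -/
lemma det_rank_one_update {K : ℕ} {M : Matrix (Fin K) (Fin K) ℝ} (hM : M.PosDef)
    (u : Fin K → ℝ) :
    (M + vecMulVec u u).det = M.det * (1 + u ⬝ᵥ M⁻¹.mulVec u) := by
  rw [vecMulVec_eq Unit, det_add_replicateCol_mul_replicateRow hM.det_pos.ne'.isUnit]
  congr 1
  rw [det_unique]
  simp only [mulVec, dotProduct, Pi.add_apply, Matrix.add_apply, Matrix.one_apply_eq,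
    Matrix.mul_apply, Matrix.replicateRow_apply, Matrix.replicateCol_apply, Finset.univ_unique,
    Finset.sum_singleton, Finset.sum_mul, Finset.mul_sum]
  congr 1
  rw [Finset.sum_comm]
  apply Finset.sum_congr rfl
  intro i _
  apply Finset.sum_congr rfl
  intro j _
  ring

/-- Trace of a hermitian real matrix is the sum of its eigenvalues. -/
lemma trace_eq_sum_eigs {K : ℕ} {M : Matrix (Fin K) (Fin K) ℝ} (hM : M.IsHermitian) :
    M.trace = ∑ i, hM.eigenvalues i := by
  simpa using hM.trace_eq_sum_eigenvalues

/-- AM–GM style bound on the log-determinant via the trace. -/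
lemma logdet_le {K : ℕ} {M : Matrix (Fin K) (Fin K) ℝ} (hM : M.PosDef)
    {c : ℝ} (hc : 0 < c) (htr : M.trace ≤ K * c) :
    Real.log M.det ≤ K * Real.log c := by
  have hev := hM.1.det_eq_prod_eigenvalues
  have hevpos : ∀ i, 0 < hM.1.eigenvalues i := hM.eigenvalues_pos
  rw [hev]
  simp only [RCLike.ofReal_real_eq_id, id_eq]
  rw [Real.log_prod (fun i _ => (hevpos i).ne')]
  have key : ∀ i : Fin K, Real.log (hM.1.eigenvalues i) ≤
      hM.1.eigenvalues i / c - 1 + Real.log c := by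
    intro i
    have h1 : Real.log (hM.1.eigenvalues i / c) ≤ hM.1.eigenvalues i / c - 1 :=
      Real.log_le_sub_one_of_pos (div_pos (hevpos i) hc)
    rw [Real.log_div (hevpos i).ne' hc.ne'] at h1
    linarith
  calc ∑ i, Real.log (hM.1.eigenvalues i) ≤ ∑ i : Fin K, (hM.1.eigenvalues i / c - 1 + Real.log c) :=
        Finset.sum_le_sum (fun i _ => key i)
    _ = (∑ i, hM.1.eigenvalues i) / c - K + K * Real.log c := by
        rw [Finset.sum_add_distrib, Finset.sum_sub_distrib, ← Finset.sum_div]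
        simp [mul_comm]
    _ ≤ K * c / c - K + K * Real.log c := by
        have h2 : (∑ i, hM.1.eigenvalues i) ≤ K * c := by
          rw [← trace_eq_sum_eigs hM.1]; exact htr
        have h3 : (∑ i, hM.1.eigenvalues i) / c ≤ (K * c) / c := by gcongr
        linarith
    _ = K * Real.log c := by field_simp; ring

/-- `x/2 ≤ log (1+x)` for `x ∈ [0,1]`. -/
lemma half_le_log_one_add {x : ℝ} (h0 : 0 ≤ x) (h1 : x ≤ 1) :
    x / 2 ≤ Real.log (1 + x) := by
  have hpos : (0:ℝ) < 1 - x / 2 := by linarith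
  have he : 1 - x / 2 ≤ Real.exp (-(x / 2)) := by
    have := Real.add_one_le_exp (-(x / 2)); linarith
  have hexp : Real.exp (x / 2) ≤ (1 - x / 2)⁻¹ := by
    have := inv_anti₀ hpos he
    rwa [← Real.exp_neg, neg_neg] at this
  have hle : (1 - x / 2)⁻¹ ≤ 1 + x := by
    rw [inv_le_iff_one_le_mul₀ hpos]
    nlinarith
  calc x / 2 = Real.log (Real.exp (x / 2)) := (Real.log_exp _).symm
    _ ≤ Real.log (1 + x) := Real.log_le_log (Real.exp_pos _) (hexp.trans hle)

/-- `vecMulVec u u` is positive semidefinite, and its quadratic form is `(u ⬝ᵥ x)²`. -/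
lemma vecMulVec_quad {K : ℕ} (u x : Fin K → ℝ) :
    x ⬝ᵥ (vecMulVec u u).mulVec x = (u ⬝ᵥ x) ^ 2 := by
  simp only [mulVec, dotProduct, vecMulVec_apply, Finset.mul_sum, Finset.sum_mul, sq]
  rw [Finset.sum_comm]
  apply Finset.sum_congr rfl; intro i _
  apply Finset.sum_congr rfl; intro j _
  ring

lemma vecMulVec_psd {K : ℕ} (u : Fin K → ℝ) : (vecMulVec u u).PosSemidef := by
  refine PosSemidef.of_dotProduct_mulVec_nonneg ?_ ?_
  · show _ = _
    ext i j
    simp [conjTranspose, vecMulVec_apply, mul_comm]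
  · intro x
    simp only [star_trivial]
    rw [vecMulVec_quad]
    positivity

/-- Deterministic cumulative constraint-violation bound.
If for every `s ∈ {1,…,t}` and every constraint `i` the pessimistic estimate
satisfies `‖Ã_s^i − A^i‖_{Σ_s} ≤ f(s)` and `(Ã_s ω_s)_i ≤ −Γ`, then
`max_i (Aω_s)_i ≤ f(s)‖ω_s‖_{Σ_s⁻¹} − Γ` for every `s`, and the cumulative
violation satisfies
`Σ_{s=1}^t max_i [(Aω_s)_i]₊ ≤ f(t)·√(2Kt log(1 + (1 + t)/K))`. -/
theorem stmt_14 {d K : ℕ} (hd : 0 < d) (hK : 0 < K) (t : ℕ)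
    (A : Matrix (Fin d) (Fin K) ℝ) (At : ℕ → Matrix (Fin d) (Fin K) ℝ)
    (ω : ℕ → Fin K → ℝ) (hω : ∀ s, ω s ∈ stdSimplex ℝ (Fin K))
    (Gram : ℕ → Matrix (Fin K) (Fin K) ℝ)
    (hG1 : Gram 1 = 1)
    (hGrec : ∀ s, 1 ≤ s → Gram (s + 1) = Gram s + vecMulVec (ω s) (ω s))
    (f : ℕ → ℝ) (hf0 : ∀ s, 0 ≤ f s) (hfmono : MonotoneOn f (Set.Icc 1 t))
    (Γ : ℝ) (hΓ : 0 ≤ Γ)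
    (hconf : ∀ s ∈ Finset.Icc 1 t, ∀ i,
      Real.sqrt ((fun a => At s i a - A i a) ⬝ᵥ
        (Gram s).mulVec (fun a => At s i a - A i a)) ≤ f s)
    (hpess : ∀ s ∈ Finset.Icc 1 t, ∀ i, (At s).mulVec (ω s) i ≤ -Γ) :
    (∀ s ∈ Finset.Icc 1 t, ∀ i,
        A.mulVec (ω s) i ≤ f s * Real.sqrt (ω s ⬝ᵥ (Gram s)⁻¹.mulVec (ω s)) - Γ) ∧
      (∑ s ∈ Finset.Icc 1 t, ⨆ i, max (A.mulVec (ω s) i) 0)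
        ≤ f t * Real.sqrt (2 * (K : ℝ) * (t : ℝ) * Real.log (1 + (1 + (t : ℝ)) / (K : ℝ))) := by
  -- simplex facts
  have hω0 : ∀ s i, 0 ≤ ω s i := fun s i => (hω s).1 i
  have hωsum : ∀ s, ∑ i, ω s i = 1 := fun s => (hω s).2
  have hωle1 : ∀ s, ω s ⬝ᵥ ω s ≤ 1 := by
    intro s
    have h1 : ∀ i : Fin K, ω s i ≤ 1 := by
      intro i
      calc ω s i ≤ ∑ j, ω s j := Finset.single_le_sum (fun j _ => hω0 s j) (Finset.mem_univ i)
        _ = 1 := hωsum s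
    calc ω s ⬝ᵥ ω s = ∑ i, ω s i * ω s i := rfl
      _ ≤ ∑ i, ω s i * 1 :=
          Finset.sum_le_sum (fun i _ => mul_le_mul_of_nonneg_left (h1 i) (hω0 s i))
      _ = 1 := by simp [hωsum s]
  -- Gram matrix facts, by induction
  have hGram : ∀ s : ℕ, 1 ≤ s → (Gram s).PosDef ∧
      (∀ x : Fin K → ℝ, x ⬝ᵥ x ≤ x ⬝ᵥ (Gram s).mulVec x) ∧
      (Gram s).trace ≤ (K : ℝ) + (s : ℝ) - 1 := by
    intro s hs
    induction s, hs using Nat.le_induction with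
    | base =>
      rw [hG1]
      refine ⟨Matrix.PosDef.one, fun x => by simp, ?_⟩
      simp [Matrix.trace_one]
    | succ n hn ih =>
      rw [hGrec n hn]
      obtain ⟨hpd, hqf, htr⟩ := ih
      refine ⟨hpd.add_posSemidef (vecMulVec_psd _), ?_, ?_⟩
      · intro x
        rw [add_mulVec, dotProduct_add, vecMulVec_quad]
        nlinarith [hqf x, sq_nonneg (ω n ⬝ᵥ x)]
      · rw [Matrix.trace_add]
        have hvv : (vecMulVec (ω n) (ω n)).trace ≤ 1 := by
          calc (vecMulVec (ω n) (ω n)).trace = ω n ⬝ᵥ ω n := by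
                simp [Matrix.trace, Matrix.diag, vecMulVec_apply, dotProduct]
            _ ≤ 1 := hωle1 n
        push_cast
        linarith
  set q : ℕ → ℝ := fun s => ω s ⬝ᵥ (Gram s)⁻¹.mulVec (ω s) with hqdef
  have hq0 : ∀ s, 1 ≤ s → 0 ≤ q s := fun s hs => by
    simpa using ((hGram s hs).1.inv.posSemidef.dotProduct_mulVec_nonneg (ω s))
  have hq1 : ∀ s, 1 ≤ s → q s ≤ 1 := fun s hs =>
    inv_quad_le_one (hGram s hs).1 (hGram s hs).2.1 (hωle1 s)
  -- Part 1
  have part1 : ∀ s ∈ Finset.Icc 1 t, ∀ i,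
      A.mulVec (ω s) i ≤ f s * Real.sqrt (q s) - Γ := by
    intro s hs i
    obtain ⟨hs1, hst⟩ := Finset.mem_Icc.mp hs
    have hc := hconf s hs i
    have hp := hpess s hs i
    set u : Fin K → ℝ := fun a => At s i a - A i a with hu
    have hexp : A.mulVec (ω s) i = (At s).mulVec (ω s) i + (-u) ⬝ᵥ ω s := by
      simp only [mulVec, dotProduct, Pi.neg_apply, hu, neg_sub, sub_mul]
      rw [← Finset.sum_add_distrib]
      apply Finset.sum_congr rfl; intro a _; ring
    have hcs : (-u) ⬝ᵥ ω s ≤ Real.sqrt (u ⬝ᵥ (Gram s).mulVec u) * Real.sqrt (q s) := by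
      have h := pd_cs_inv (hGram s hs1).1 (-u) (ω s)
      simp only [Matrix.mulVec_neg, dotProduct_neg, neg_dotProduct, neg_neg] at h
      simpa only [neg_dotProduct] using h
    have hsq : Real.sqrt (u ⬝ᵥ (Gram s).mulVec u) * Real.sqrt (q s) ≤ f s * Real.sqrt (q s) :=
      mul_le_mul_of_nonneg_right hc (Real.sqrt_nonneg _)
    calc A.mulVec (ω s) i = (At s).mulVec (ω s) i + (-u) ⬝ᵥ ω s := hexp
      _ ≤ -Γ + f s * Real.sqrt (q s) := add_le_add hp (hcs.trans hsq)
      _ = f s * Real.sqrt (q s) - Γ := by ring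
  refine ⟨part1, ?_⟩
  -- determinant telescoping
  have hdet : ∀ n : ℕ, (Gram (n + 1)).det = ∏ s ∈ Finset.Icc 1 n, (1 + q s) := by
    intro n
    induction n with
    | zero => simp [hG1]
    | succ m ih =>
      rw [hGrec (m + 1) (by omega), det_rank_one_update (hGram (m + 1) (by omega)).1,
        Finset.prod_Icc_succ_top (by omega), ih]
  have hKpos : (0 : ℝ) < K := by exact_mod_cast hK
  set L : ℝ := Real.log (1 + (1 + (t : ℝ)) / K) with hL
  have hLpos : 0 ≤ L := Real.log_nonneg (by
    have h0 : (0 : ℝ) ≤ (1 + (t : ℝ)) / K := by positivity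
    linarith)
  -- sum of quadratic forms bound (elliptical potential)
  have hS : (∑ s ∈ Finset.Icc 1 t, q s) ≤ 2 * (K : ℝ) * L := by
    have h1 : (∑ s ∈ Finset.Icc 1 t, q s) ≤ 2 * Real.log ((Gram (t + 1)).det) := by
      rw [hdet t, Real.log_prod (fun s hsmem => by
        have := hq0 s (Finset.mem_Icc.mp hsmem).1; positivity)]
      rw [Finset.mul_sum]
      apply Finset.sum_le_sum
      intro s hsmem
      obtain ⟨hs1, _⟩ := Finset.mem_Icc.mp hsmem
      have := half_le_log_one_add (hq0 s hs1) (hq1 s hs1)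
      linarith
    set c : ℝ := ((K : ℝ) + t) / K with hc
    have hcpos : 0 < c := by positivity
    have h2 : Real.log ((Gram (t + 1)).det) ≤ (K : ℝ) * Real.log c := by
      apply logdet_le (hGram (t + 1) (by omega)).1 hcpos
      have htr := (hGram (t + 1) (by omega)).2.2
      have : (K : ℝ) * c = (K : ℝ) + t := by rw [hc]; field_simp
      rw [this]
      push_cast at htr
      linarith
    have h3 : Real.log c ≤ L := by
      apply Real.log_le_log hcpos
      rw [hc]
      rw [add_div]
      have : (K : ℝ) / K = 1 := div_self hKpos.ne'
      rw [this]
      have h4 : (t : ℝ) / K ≤ (1 + t) / K := by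
        gcongr
        linarith
      linarith [h4]
    calc (∑ s ∈ Finset.Icc 1 t, q s) ≤ 2 * Real.log ((Gram (t + 1)).det) := h1
      _ ≤ 2 * ((K : ℝ) * Real.log c) := by linarith
      _ ≤ 2 * ((K : ℝ) * L) := by nlinarith
      _ = 2 * (K : ℝ) * L := by ring
  -- per-round sup bound
  haveI : Nonempty (Fin d) := Fin.pos_iff_nonempty.mp hd
  have hstep : ∀ s ∈ Finset.Icc 1 t, (⨆ i, max (A.mulVec (ω s) i) 0) ≤ f s * Real.sqrt (q s) := by
    intro s hs
    apply ciSup_le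
    intro i
    have h1 := part1 s hs i
    have h2 : 0 ≤ f s * Real.sqrt (q s) := mul_nonneg (hf0 s) (Real.sqrt_nonneg _)
    exact max_le (by linarith) h2
  calc (∑ s ∈ Finset.Icc 1 t, ⨆ i, max (A.mulVec (ω s) i) 0)
      ≤ ∑ s ∈ Finset.Icc 1 t, f s * Real.sqrt (q s) := Finset.sum_le_sum hstep
    _ ≤ ∑ s ∈ Finset.Icc 1 t, f t * Real.sqrt (q s) := by
        apply Finset.sum_le_sum
        intro s hs
        obtain ⟨hs1, hst⟩ := Finset.mem_Icc.mp hs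
        exact mul_le_mul_of_nonneg_right
          (hfmono ⟨hs1, hst⟩ ⟨hs1.trans hst, le_refl t⟩ hst) (Real.sqrt_nonneg _)
    _ = f t * ∑ s ∈ Finset.Icc 1 t, Real.sqrt (q s) := by rw [Finset.mul_sum]
    _ ≤ f t * Real.sqrt ((t : ℝ) * ∑ s ∈ Finset.Icc 1 t, q s) := by
        apply mul_le_mul_of_nonneg_left _ (hf0 t)
        have hnn : 0 ≤ ∑ s ∈ Finset.Icc 1 t, Real.sqrt (q s) :=
          Finset.sum_nonneg fun s _ => Real.sqrt_nonneg _
        rw [← Real.sqrt_sq hnn]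
        apply Real.sqrt_le_sqrt
        have hcheb := sq_sum_le_card_mul_sum_sq (s := Finset.Icc 1 t)
          (f := fun s => Real.sqrt (q s))
        have hcard : ((Finset.Icc 1 t).card : ℝ) = (t : ℝ) := by
          rw [Nat.card_Icc]; norm_num
        have hsq : ∀ s ∈ Finset.Icc 1 t, Real.sqrt (q s) ^ 2 = q s := fun s hsmem =>
          Real.sq_sqrt (hq0 s (Finset.mem_Icc.mp hsmem).1)
        calc (∑ s ∈ Finset.Icc 1 t, Real.sqrt (q s)) ^ 2
            ≤ ((Finset.Icc 1 t).card : ℝ) * ∑ s ∈ Finset.Icc 1 t, Real.sqrt (q s) ^ 2 := by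
              exact_mod_cast hcheb
          _ = (t : ℝ) * ∑ s ∈ Finset.Icc 1 t, q s := by
              rw [hcard, Finset.sum_congr rfl hsq]
    _ ≤ f t * Real.sqrt ((t : ℝ) * (2 * (K : ℝ) * L)) := by
        apply mul_le_mul_of_nonneg_left _ (hf0 t)
        apply Real.sqrt_le_sqrt
        have : (0 : ℝ) ≤ (t : ℝ) := Nat.cast_nonneg t
        nlinarith
    _ = f t * Real.sqrt (2 * (K : ℝ) * (t : ℝ) * L) := by
        congr 1
        rw [show (t : ℝ) * (2 * (K : ℝ) * L) = 2 * (K : ℝ) * (t : ℝ) * L from by ring]
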